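/- Let $h: \mathbb{R}^{m \times n} \to \mathbb{R}$ have $L_h$-Lipschitz gradient, $\lambda > 0$, and fix $\mathbf{Z}$. Suppose $\mathbf{B}^+$ minimizes $\mathbf{B} \mapsto h(\mathbf{B}) + \langle \Lambda, \mathbf{B} - \mathbf{Z}\rangle + \frac{\lambda}{2}\|\mathbf{B} - \mathbf{Z}\|^2$ and define $\Lambda^+ = \Lambda + \lambda(\mathbf{B}^+ - \mathbf{Z})$, with $\Lambda = -\nabla h(\mathbf{B})$ for some previous iterate $\mathbf{B}$ satisfying $\Lambda^+ = -\nabla h(\mathbf{B}^+)$. Then the augmented Lagrangian decrease satisfies: $\left[h(\mathbf{B}) + \langle \Lambda, \mathbf{B} - \mathbf{Z}\rangle + \frac{\lambda}{2}\|\mathbf{B} - \mathbf{Z}\|^2\right] - \left[h(\mathbf{B}^+) + \langle \Lambda^+, \mathbf{B}^+ - \mathbf{Z}\rangle + \frac{\lambda}{2}\|\mathbf{B}^+ - \mathbf{Z}\|^2\right] \ge \left(\frac{\lambda - L_h}{2} - \frac{L_h^2}{\lambda}\right)\|\mathbf{B} - \mathbf{B}^+\|^2$. -/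

import Mathlib

lemma descent_aux {E : Type*} [NormedAddCommGroup E] [InnerProductSpace ℝ E] [CompleteSpace E]
    (h : E → ℝ) (g : E → E) (Lh : ℝ)
    (hgrad : ∀ x, HasGradientAt h (g x) x)
    (hlip : ∀ x y, ‖g x - g y‖ ≤ Lh * ‖x - y‖) (x d : E) :
    h (x + d) - h x - (inner ℝ (g x) d : ℝ) ≥ -(Lh / 2) * ‖d‖ ^ 2 := by
  set φ : ℝ → ℝ := fun t => h (x + t • d) - t * (inner ℝ (g x) d : ℝ) + Lh / 2 * t ^ 2 * ‖d‖ ^ 2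
    with hφ
  have hD : ∀ t : ℝ, HasDerivAt φ
      ((inner ℝ (g (x + t • d)) d : ℝ) - (inner ℝ (g x) d : ℝ) + Lh / 2 * (2 * t) * ‖d‖ ^ 2) t := by
    intro t
    have hc : HasDerivAt (fun t : ℝ => x + t • d) d t := by
      simpa using ((hasDerivAt_id t).smul_const d).const_add x
    have h1 : HasDerivAt (fun t : ℝ => h (x + t • d)) ((inner ℝ (g (x + t • d)) d : ℝ)) t := by
      have := ((hgrad (x + t • d)).hasFDerivAt).comp_hasDerivAt t hc
      simp at this; exact this
    have h2 : HasDerivAt (fun t : ℝ => t * (inner ℝ (g x) d : ℝ)) ((inner ℝ (g x) d : ℝ)) t := by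
      simpa using (hasDerivAt_id t).mul_const ((inner ℝ (g x) d : ℝ))
    have h3 : HasDerivAt (fun t : ℝ => Lh / 2 * t ^ 2 * ‖d‖ ^ 2) (Lh / 2 * (2 * t) * ‖d‖ ^ 2) t := by
      have := ((hasDerivAt_pow 2 t).const_mul (Lh / 2)).mul_const (‖d‖ ^ 2)
      simpa [mul_comm, mul_assoc] using this
    exact (h1.sub h2).add h3
  have hmono : MonotoneOn φ (Set.Icc (0:ℝ) 1) := by
    apply monotoneOn_of_deriv_nonneg (convex_Icc 0 1)
    · exact Continuous.continuousOn
        (continuous_iff_continuousAt.2 fun t => (hD t).differentiableAt.continuousAt)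
    · intro t ht
      exact (hD t).differentiableAt.differentiableWithinAt
    · intro t ht
      rw [interior_Icc, Set.mem_Ioo] at ht
      rw [(hD t).deriv]
      have key : (inner ℝ (g (x + t • d)) d : ℝ) - (inner ℝ (g x) d : ℝ) ≥ -(Lh * t * ‖d‖ ^ 2) := by
        have h1 : |(inner ℝ (g (x + t • d) - g x) d : ℝ)| ≤ ‖g (x + t • d) - g x‖ * ‖d‖ :=
          abs_real_inner_le_norm _ _
        have h2 : ‖g (x + t • d) - g x‖ ≤ Lh * ‖(x + t • d) - x‖ := hlip _ _
        have h3 : ‖(x + t • d) - x‖ = t * ‖d‖ := by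
          simp [norm_smul, abs_of_pos ht.1]
        rw [inner_sub_left] at h1
        have h4 : ‖g (x + t • d) - g x‖ * ‖d‖ ≤ Lh * t * ‖d‖ ^ 2 := by
          rw [h3] at h2; nlinarith [norm_nonneg d, norm_nonneg (g (x + t • d) - g x)]
        have := abs_le.1 h1
        linarith [this.1]
      nlinarith
  have := hmono (Set.mem_Icc.2 ⟨le_refl 0, zero_le_one⟩) (Set.mem_Icc.2 ⟨zero_le_one, le_refl 1⟩)
    zero_le_one
  simp only [hφ, zero_smul, add_zero, zero_mul, one_smul, one_pow, one_mul, pow_two] at this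
  nlinarith [this]

theorem stmt_13 {m n : ℕ}
    (h : EuclideanSpace ℝ (Fin m × Fin n) → ℝ)
    (g : EuclideanSpace ℝ (Fin m × Fin n) → EuclideanSpace ℝ (Fin m × Fin n))
    (Lh lam : ℝ) (hLh : 0 < Lh) (hlam : 0 < lam)
    (hgrad : ∀ x, HasGradientAt h (g x) x)
    (hlip : ∀ x y, ‖g x - g y‖ ≤ Lh * ‖x - y‖)
    (Z B Bp Λ Λp : EuclideanSpace ℝ (Fin m × Fin n))
    (hΛ : Λ = -g B)
    (hfoc : g Bp + Λ + lam • (Bp - Z) = 0)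
    (hΛp : Λp = Λ + lam • (Bp - Z)) (hΛp' : Λp = -g Bp) :
    (h B + (inner ℝ Λ (B - Z) : ℝ) + lam / 2 * ‖B - Z‖ ^ 2) -
        (h Bp + (inner ℝ Λp (Bp - Z) : ℝ) + lam / 2 * ‖Bp - Z‖ ^ 2) ≥
      ((lam - Lh) / 2 - Lh ^ 2 / lam) * ‖B - Bp‖ ^ 2 := by
  have hgBp : g Bp = g B - lam • (Bp - Z) := by
    have : g Bp = -Λ - lam • (Bp - Z) := by
      have := hfoc; linear_combination (norm := module) this
    rw [this, hΛ]; module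
  have K2 : lam • (Bp - Z) = g B - g Bp := by rw [hgBp]; module
  have K3 : lam * ‖Bp - Z‖ ^ 2 ≤ Lh ^ 2 / lam * ‖B - Bp‖ ^ 2 := by
    have h1 : ‖lam • (Bp - Z)‖ = lam * ‖Bp - Z‖ := by
      rw [norm_smul, Real.norm_eq_abs, abs_of_pos hlam]
    have h2 : lam * ‖Bp - Z‖ ≤ Lh * ‖B - Bp‖ := by
      rw [← h1, K2]; exact hlip B Bp
    have h5 : lam ^ 2 * ‖Bp - Z‖ ^ 2 ≤ Lh ^ 2 * ‖B - Bp‖ ^ 2 := by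
      nlinarith [h2, mul_nonneg hlam.le (norm_nonneg (Bp - Z)), norm_nonneg (B - Bp),
        mul_nonneg hLh.le (norm_nonneg (B - Bp))]
    rw [div_mul_eq_mul_div, le_div_iff₀ hlam]
    nlinarith [h5]
  have K1 : h B - h Bp - (inner ℝ (g Bp) (B - Bp) : ℝ) ≥ -(Lh / 2) * ‖B - Bp‖ ^ 2 := by
    have := descent_aux h g Lh hgrad hlip Bp (B - Bp)
    simpa using this
  have hI : (h B + (inner ℝ Λ (B - Z) : ℝ) + lam / 2 * ‖B - Z‖ ^ 2) -
      (h Bp + (inner ℝ Λp (Bp - Z) : ℝ) + lam / 2 * ‖Bp - Z‖ ^ 2) =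
      (h B - h Bp - (inner ℝ (g Bp) (B - Bp) : ℝ)) + lam / 2 * ‖B - Bp‖ ^ 2
        - lam * ‖Bp - Z‖ ^ 2 := by
    rw [hΛ, hΛp', hgBp]
    rw [← real_inner_self_eq_norm_sq, ← real_inner_self_eq_norm_sq,
      ← real_inner_self_eq_norm_sq]
    simp only [inner_sub_left, inner_sub_right, inner_neg_left, inner_neg_right,
      real_inner_smul_left, real_inner_smul_right]
    have e1 : lam * (inner ℝ Z B : ℝ) = lam * (inner ℝ B Z : ℝ) := by rw [real_inner_comm]
    have e2 : lam * (inner ℝ Z Bp : ℝ) = lam * (inner ℝ Bp Z : ℝ) := by rw [real_inner_comm]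
    have e3 : lam * (inner ℝ Bp B : ℝ) = lam * (inner ℝ B Bp : ℝ) := by rw [real_inner_comm]
    ring_nf
    linarith [e1, e2, e3]
  rw [hI]
  nlinarith [K1, K3, norm_nonneg (B - Bp)]
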